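/- Let X and Y be Hilbert spaces, −A the generator of a strongly continuous semigroup (T(t))_{t≥0} on X, and C : D(A) → Y such that there exist constants 0 < m ≤ M with m²‖x‖² ≤ ∫₀^∞ ‖C T(t)x‖²_Y dt ≤ M²‖x‖² for all x ∈ D(A). Then the semigroup is similar to a contraction semigroup: the formula ⟨x, y⟩∼ := ∫₀^∞ ⟨C T(t)x, C T(t)y⟩_Y dt extends to an inner product on X whose norm is equivalent to the original norm, and ‖T(t)x‖∼ ≤ ‖x‖∼ for all x ∈ X and t ≥ 0. -/

import Mathlib

open MeasureTheory

set_option maxHeartbeats 1000000 in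
/-- On Hilbert spaces, an admissible and exactly observable (in infinite time) system is
similar to a contraction semigroup: the new norm `N x = (∫₀^∞ ‖C T(t)x‖² dt)^{1/2}`
(defined on the dense domain `D` and extended by continuity) is equivalent to the
original one, satisfies the parallelogram law (hence comes from an inner product), and
makes each `T(t)` a contraction. -/
theorem stmt13 {X Y : Type*} [NormedAddCommGroup X] [InnerProductSpace ℂ X]
    [CompleteSpace X] [NormedAddCommGroup Y] [InnerProductSpace ℂ Y] [CompleteSpace Y]
    (T : ℝ → X →L[ℂ] X)
    (hT0 : T 0 = 1)
    (hTadd : ∀ t s : ℝ, 0 ≤ t → 0 ≤ s → T (t + s) = (T t).comp (T s))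
    (hTcont : ∀ x : X, ContinuousOn (fun t => T t x) (Set.Ici 0))
    (D : Submodule ℂ X) (hD : Dense (D : Set X))
    (hTD : ∀ x ∈ D, ∀ t : ℝ, 0 ≤ t → T t x ∈ D)
    (C : X → Y) (hC : IsLinearMap ℂ C)
    (m M : ℝ) (hm : 0 < m) (hmM : m ≤ M)
    (hint : ∀ x ∈ D, IntegrableOn (fun t => ‖C (T t x)‖ ^ 2) (Set.Ioi 0))
    (hlow : ∀ x ∈ D, m ^ 2 * ‖x‖ ^ 2 ≤ ∫ t in Set.Ioi (0:ℝ), ‖C (T t x)‖ ^ 2)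
    (hup : ∀ x ∈ D, (∫ t in Set.Ioi (0:ℝ), ‖C (T t x)‖ ^ 2) ≤ M ^ 2 * ‖x‖ ^ 2) :
    ∃ N : X → ℝ,
      (∀ x, 0 ≤ N x) ∧
      (∀ x ∈ D, N x ^ 2 = ∫ t in Set.Ioi (0:ℝ), ‖C (T t x)‖ ^ 2) ∧
      (∀ x : X, m * ‖x‖ ≤ N x ∧ N x ≤ M * ‖x‖) ∧
      (∀ x y : X, N (x + y) ^ 2 + N (x - y) ^ 2 = 2 * N x ^ 2 + 2 * N y ^ 2) ∧
      (∀ t : ℝ, 0 ≤ t → ∀ x : X, N (T t x) ≤ N x) := by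
  classical
  set μ : Measure ℝ := volume.restrict (Set.Ioi 0) with hμ
  set I : X → ℝ := fun x => ∫ t in Set.Ioi (0:ℝ), ‖C (T t x)‖ ^ 2 with hIdef
  have hI_nonneg : ∀ x, 0 ≤ I x := fun x => integral_nonneg fun t => sq_nonneg _
  -- measurability of the norm function
  have hmeas : ∀ x ∈ D, AEStronglyMeasurable (fun t => ‖C (T t x)‖) μ := by
    intro x hx
    have h1 := (hint x hx).aestronglyMeasurable
    have h2 : AEStronglyMeasurable (fun t => Real.sqrt (‖C (T t x)‖ ^ 2)) μ :=
      Real.continuous_sqrt.comp_aestronglyMeasurable h1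
    simpa [Real.sqrt_sq (norm_nonneg _)] using h2
  -- integrability of products
  have hprod : ∀ x ∈ D, ∀ y ∈ D,
      Integrable (fun t => ‖C (T t x)‖ * ‖C (T t y)‖) μ := by
    intro x hx y hy
    refine Integrable.mono' (((hint x hx).add (hint y hy)).div_const 2)
      ((hmeas x hx).mul (hmeas y hy)) ?_
    refine Filter.Eventually.of_forall fun t => ?_
    rw [Real.norm_of_nonneg (by positivity)]
    have h := sq_nonneg (‖C (T t x)‖ - ‖C (T t y)‖)
    simp only [Pi.add_apply, Pi.div_apply]
    nlinarith [norm_nonneg (C (T t x)), norm_nonneg (C (T t y))]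
  -- linearity rewrites
  have hlin_add : ∀ (x y : X) (t : ℝ), C (T t (x + y)) = C (T t x) + C (T t y) := by
    intro x y t; rw [map_add]; exact hC.map_add _ _
  have hlin_sub : ∀ (x y : X) (t : ℝ), C (T t (x - y)) = C (T t x) - C (T t y) := by
    intro x y t
    rw [map_sub]
    have := (IsLinearMap.mk' C hC).map_sub (T t x) (T t y)
    simpa using this
  -- Cauchy-Schwarz
  have hCS : ∀ x ∈ D, ∀ y ∈ D,
      (∫ t in Set.Ioi (0:ℝ), ‖C (T t x)‖ * ‖C (T t y)‖)
        ≤ Real.sqrt (I x) * Real.sqrt (I y) := by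
    intro x hx y hy
    have hconj : Real.HolderConjugate 2 2 := Real.HolderConjugate.two_two
    have hf : MemLp (fun t => ‖C (T t x)‖) 2 μ :=
      (memLp_two_iff_integrable_sq (hmeas x hx)).2 (hint x hx)
    have hg : MemLp (fun t => ‖C (T t y)‖) 2 μ :=
      (memLp_two_iff_integrable_sq (hmeas y hy)).2 (hint y hy)
    have := integral_mul_le_Lp_mul_Lq_of_nonneg (μ := μ) hconj
      (Filter.Eventually.of_forall fun t => norm_nonneg _)
      (Filter.Eventually.of_forall fun t => norm_nonneg _)
      (by simpa using hf) (by simpa using hg)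
    calc (∫ t in Set.Ioi (0:ℝ), ‖C (T t x)‖ * ‖C (T t y)‖) ≤
        (∫ t, ‖C (T t x)‖ ^ (2:ℝ) ∂μ) ^ (1/(2:ℝ)) * (∫ t, ‖C (T t y)‖ ^ (2:ℝ) ∂μ) ^ (1/(2:ℝ)) :=
          this
      _ = Real.sqrt (I x) * Real.sqrt (I y) := by
          have e1 : ∀ z : X, (∫ t, ‖C (T t z)‖ ^ (2:ℝ) ∂μ) = I z := by
            intro z
            simp only [hIdef, hμ]
            norm_num [Real.rpow_natCast]
          rw [e1 x, e1 y, Real.sqrt_eq_rpow, Real.sqrt_eq_rpow]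
  -- parallelogram for I on D
  have hIpar : ∀ x ∈ D, ∀ y ∈ D, I (x + y) + I (x - y) = 2 * I x + 2 * I y := by
    intro x hx y hy
    have h1 : I (x + y) + I (x - y)
        = ∫ t in Set.Ioi (0:ℝ), (‖C (T t (x+y))‖ ^ 2 + ‖C (T t (x-y))‖ ^ 2) :=
      (integral_add (hint _ (D.add_mem hx hy)) (hint _ (D.sub_mem hx hy))).symm
    have h2 : (2 : ℝ) * I x + 2 * I y
        = ∫ t in Set.Ioi (0:ℝ), (2 * ‖C (T t x)‖ ^ 2 + 2 * ‖C (T t y)‖ ^ 2) := by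
      rw [integral_add ((hint x hx).const_mul 2) ((hint y hy).const_mul 2),
        integral_const_mul, integral_const_mul]
    rw [h1, h2]
    refine integral_congr_ae (Filter.Eventually.of_forall fun t => ?_)
    simp only [hlin_add, hlin_sub]
    have := parallelogram_law_with_norm ℂ (C (T t x)) (C (T t y))
    simp only [pow_two]
    linarith [this]
  -- triangle inequality for sqrt ∘ I on D
  have htri : ∀ x ∈ D, ∀ y ∈ D,
      Real.sqrt (I (x + y)) ≤ Real.sqrt (I x) + Real.sqrt (I y) := by
    intro x hx y hy
    have key : I (x + y) ≤ (Real.sqrt (I x) + Real.sqrt (I y)) ^ 2 := by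
      have step1 : I (x + y) ≤ ∫ t in Set.Ioi (0:ℝ),
          (‖C (T t x)‖ ^ 2 + 2 * (‖C (T t x)‖ * ‖C (T t y)‖) + ‖C (T t y)‖ ^ 2) := by
        refine integral_mono (hint _ (D.add_mem hx hy)) ?_ ?_
        · exact ((hint x hx).add ((hprod x hx y hy).const_mul 2)).add (hint y hy)
        · intro t
          simp only [hIdef]
          rw [hlin_add]
          have htr := norm_add_le (C (T t x)) (C (T t y))
          nlinarith [norm_nonneg (C (T t (x+y))), norm_nonneg (C (T t x)), norm_nonneg (C (T t y)),
            norm_add_le (C (T t x)) (C (T t y)), norm_nonneg (C (T t x) + C (T t y))]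
      have step2 : (∫ t in Set.Ioi (0:ℝ),
          (‖C (T t x)‖ ^ 2 + 2 * (‖C (T t x)‖ * ‖C (T t y)‖) + ‖C (T t y)‖ ^ 2))
          = I x + 2 * (∫ t in Set.Ioi (0:ℝ), ‖C (T t x)‖ * ‖C (T t y)‖) + I y := by
        have ha : Integrable (fun t => ‖C (T t x)‖ ^ 2) μ := hint x hx
        have hb : Integrable (fun t => 2 * (‖C (T t x)‖ * ‖C (T t y)‖)) μ :=
          (hprod x hx y hy).const_mul 2
        have hc : Integrable (fun t => ‖C (T t y)‖ ^ 2) μ := hint y hy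
        have hab : Integrable (fun t => ‖C (T t x)‖ ^ 2 + 2 * (‖C (T t x)‖ * ‖C (T t y)‖)) μ :=
          ha.add hb
        rw [show (∫ t in Set.Ioi (0:ℝ),
            (‖C (T t x)‖ ^ 2 + 2 * (‖C (T t x)‖ * ‖C (T t y)‖) + ‖C (T t y)‖ ^ 2))
            = ∫ t, ((fun t => ‖C (T t x)‖ ^ 2 + 2 * (‖C (T t x)‖ * ‖C (T t y)‖)) t
              + (fun t => ‖C (T t y)‖ ^ 2) t) ∂μ from rfl,
          integral_add hab hc,
          show (∫ t, (fun t => ‖C (T t x)‖ ^ 2 + 2 * (‖C (T t x)‖ * ‖C (T t y)‖)) t ∂μ)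
            = ∫ t, ((fun t => ‖C (T t x)‖ ^ 2) t
              + (fun t => 2 * (‖C (T t x)‖ * ‖C (T t y)‖)) t) ∂μ from rfl,
          integral_add ha hb, integral_const_mul]
      have step3 := hCS x hx y hy
      have hsx := Real.sq_sqrt (hI_nonneg x)
      have hsy := Real.sq_sqrt (hI_nonneg y)
      nlinarith [step1, step2]
    calc Real.sqrt (I (x + y)) ≤ Real.sqrt ((Real.sqrt (I x) + Real.sqrt (I y)) ^ 2) :=
          Real.sqrt_le_sqrt key
      _ = Real.sqrt (I x) + Real.sqrt (I y) :=
          Real.sqrt_sq (by positivity)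
  -- bounds for sqrt I on D
  have hlow' : ∀ x ∈ D, m * ‖x‖ ≤ Real.sqrt (I x) := by
    intro x hx
    have : (m * ‖x‖) ^ 2 ≤ I x := by
      have := hlow x hx; nlinarith
    calc m * ‖x‖ = Real.sqrt ((m * ‖x‖) ^ 2) :=
          (Real.sqrt_sq (mul_nonneg hm.le (norm_nonneg _))).symm
      _ ≤ Real.sqrt (I x) := Real.sqrt_le_sqrt this
  have hup' : ∀ x ∈ D, Real.sqrt (I x) ≤ M * ‖x‖ := by
    intro x hx
    have h2 : I x ≤ (M * ‖x‖) ^ 2 := by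
      have := hup x hx; nlinarith
    calc Real.sqrt (I x) ≤ Real.sqrt ((M * ‖x‖) ^ 2) := Real.sqrt_le_sqrt h2
      _ = M * ‖x‖ := Real.sqrt_sq (mul_nonneg (hm.le.trans hmM) (norm_nonneg _))
  -- contraction of I on D
  have hIcontr : ∀ t : ℝ, 0 ≤ t → ∀ x ∈ D, I (T t x) ≤ I x := by
    intro t ht x hx
    have e1 : I (T t x) = ∫ s in Set.Ioi (0:ℝ), ‖C (T (s + t) x)‖ ^ 2 := by
      refine setIntegral_congr_fun measurableSet_Ioi fun s hs => ?_
      simp only [hTadd s t (le_of_lt hs) ht, ContinuousLinearMap.coe_comp',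
        Function.comp_apply]
    have e2 : (∫ s in Set.Ioi (0:ℝ), ‖C (T (s + t) x)‖ ^ 2)
        = ∫ s in Set.Ioi t, ‖C (T s x)‖ ^ 2 := by
      have hmp : MeasurePreserving (fun s : ℝ => s + t) volume volume :=
        measurePreserving_add_right volume t
      have hemb : MeasurableEmbedding (fun s : ℝ => s + t) :=
        (MeasurableEquiv.addRight t).measurableEmbedding
      have hpre : (fun s : ℝ => s + t) ⁻¹' (Set.Ioi t) = Set.Ioi 0 := by
        ext s; simp [Set.mem_Ioi]
      have := hmp.setIntegral_preimage_emb hemb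
        (fun s => ‖C (T s x)‖ ^ 2) (Set.Ioi t)
      rw [hpre] at this
      exact this
    have e3 : (∫ s in Set.Ioi t, ‖C (T s x)‖ ^ 2) ≤ I x := by
      refine setIntegral_mono_set (hint x hx) ?_ ?_
      · exact Filter.Eventually.of_forall fun s => sq_nonneg _
      · exact HasSubset.Subset.eventuallyLE (Set.Ioi_subset_Ioi ht)
    rw [e1, e2] at *
    exact le_trans (le_of_eq rfl) e3
  -- define F on the subtype and extend
  have key1 : ∀ u v : ↥D, Real.sqrt (I ↑u) ≤ Real.sqrt (I ↑v) + M * ‖(u:X) - (v:X)‖ := by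
    intro u v
    have hvu : (v:X) + ((u:X) - (v:X)) = (u:X) := by abel
    calc Real.sqrt (I (u:X)) = Real.sqrt (I ((v:X) + ((u:X) - (v:X)))) := by rw [hvu]
      _ ≤ Real.sqrt (I (v:X)) + Real.sqrt (I ((u:X) - (v:X))) :=
          htri _ v.2 _ (D.sub_mem u.2 v.2)
      _ ≤ Real.sqrt (I (v:X)) + M * ‖(u:X) - (v:X)‖ := by
          have := hup' _ (D.sub_mem u.2 v.2); gcongr
  have hFuc : UniformContinuous (fun u : ↥D => Real.sqrt (I ↑u)) := by
    have hlip : LipschitzWith (⟨M, le_trans hm.le hmM⟩ : NNReal)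
        (fun u : ↥D => Real.sqrt (I ↑u)) := by
      refine LipschitzWith.of_dist_le_mul fun u v => ?_
      have h1 := key1 u v
      have h2 := key1 v u
      rw [norm_sub_rev] at h2
      calc dist (Real.sqrt (I ↑u)) (Real.sqrt (I ↑v))
          = |Real.sqrt (I ↑u) - Real.sqrt (I ↑v)| := Real.dist_eq _ _
        _ ≤ M * ‖(u:X) - (v:X)‖ := by rw [abs_sub_le_iff]; constructor <;> linarith
        _ = M * dist u v := by rw [Subtype.dist_eq, dist_eq_norm]
    exact hlip.uniformContinuous
  have hui : IsUniformInducing ((↑) : ↥D → X) :=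
    isUniformEmbedding_subtype_val.isUniformInducing
  have hdr : DenseRange ((↑) : ↥D → X) := by
    rw [DenseRange, Subtype.range_coe]; exact hD
  set N : X → ℝ := (hui.isDenseInducing hdr).extend (fun u : ↥D => Real.sqrt (I ↑u)) with hN
  have hNuc : UniformContinuous N :=
    uniformContinuous_uniformly_extend hui hdr hFuc
  have hNcont : Continuous N := hNuc.continuous
  have hNe : ∀ u : ↥D, N ↑u = Real.sqrt (I ↑u) := fun u =>
    uniformly_extend_of_ind hui hdr hFuc u
  have hNeD : ∀ x : X, ∀ hx : x ∈ D, N x = Real.sqrt (I x) := fun x hx => hNe ⟨x, hx⟩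
  -- density closure principle
  have key : ∀ (s : Set X), IsClosed s → ((D : Set X) ⊆ s) → ∀ x, x ∈ s := by
    intro s hs hsub x
    exact hs.closure_subset_iff.2 hsub (hD x)
  refine ⟨N, ?_, ?_, ?_, ?_, ?_⟩
  · -- nonneg
    refine key {x | 0 ≤ N x} (isClosed_le continuous_const hNcont) ?_
    intro x hx
    simp only [Set.mem_setOf_eq, hNeD x hx]
    exact Real.sqrt_nonneg _
  · -- formula on D
    intro x hx
    rw [hNeD x hx, Real.sq_sqrt (hI_nonneg x)]
  · -- bounds
    intro x
    constructor
    · refine key {x | m * ‖x‖ ≤ N x}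
        (isClosed_le (continuous_const.mul continuous_norm) hNcont) ?_ x
      intro z hz
      simp only [Set.mem_setOf_eq, hNeD z hz]
      exact hlow' z hz
    · refine key {x | N x ≤ M * ‖x‖}
        (isClosed_le hNcont (continuous_const.mul continuous_norm)) ?_ x
      intro z hz
      simp only [Set.mem_setOf_eq, hNeD z hz]
      exact hup' z hz
  · -- parallelogram
    intro x y
    have keyprod : ∀ (s : Set (X × X)), IsClosed s →
        ((D : Set X) ×ˢ (D : Set X) ⊆ s) → ∀ p, p ∈ s := by
      intro s hs hsub p
      exact hs.closure_subset_iff.2 hsub ((hD.prod hD) p)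
    have := keyprod {p : X × X |
        N (p.1 + p.2) ^ 2 + N (p.1 - p.2) ^ 2 = 2 * N p.1 ^ 2 + 2 * N p.2 ^ 2}
      (isClosed_eq (by fun_prop) (by fun_prop)) ?_ (x, y)
    · exact this
    · rintro ⟨a, b⟩ ⟨ha, hb⟩
      simp only [Set.mem_setOf_eq]
      rw [hNeD a ha, hNeD b hb, hNeD _ (D.add_mem ha hb), hNeD _ (D.sub_mem ha hb),
        Real.sq_sqrt (hI_nonneg _), Real.sq_sqrt (hI_nonneg _), Real.sq_sqrt (hI_nonneg _),
        Real.sq_sqrt (hI_nonneg _)]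
      exact hIpar a ha b hb
  · -- contraction
    intro t ht x
    refine key {x | N (T t x) ≤ N x}
      (isClosed_le (hNcont.comp (T t).continuous) hNcont) ?_ x
    intro z hz
    simp only [Set.mem_setOf_eq]
    rw [hNeD z hz, hNeD _ (hTD z hz t ht)]
    exact Real.sqrt_le_sqrt (hIcontr t ht z hz)
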